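/- Let F be a distribution function with density f such that f(t)/t^α → C as t → 0+, where C ∈ (0,∞) and -1 < α < 1. Then for every ε > 0 with 0 < ε < C, there exists δ > 0 such that for all 0 < x < F(δ′) for suitable δ′, the quantile function satisfies ((1+α)/(C+ε))^{1/(1+α)} x^{1/(1+α)} < F⁻¹(x) < ((1+α)/(C-ε))^{1/(1+α)} x^{1/(1+α)}. -/

import Mathlib

open MeasureTheory Set

/-- Bounds on the quantile function near `0` when the density satisfies
`f(t)/t^α → C` as `t → 0+`. -/
theorem quantile_bounds_near_zero (f : ℝ → ℝ) (hf : ∀ t, 0 ≤ f t)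
    (α C : ℝ) (hα1 : -1 < α) (hα2 : α < 1) (hC : 0 < C)
    (hlim : Filter.Tendsto (fun t => f t / t ^ α) (nhdsWithin 0 (Set.Ioi 0)) (nhds C))
    (F : ℝ → ℝ) (hF : ∀ x, F x = ∫ t in Set.Ioc (0 : ℝ) x, f t)
    (Finv : ℝ → ℝ) (hFinv : ∀ u, Finv u = sInf {y | u ≤ F y}) :
    ∀ ε, 0 < ε → ε < C → ∃ δ > (0 : ℝ), ∀ x, 0 < x → x < F δ →
      ((1 + α) / (C + ε)) ^ (1 / (1 + α)) * x ^ (1 / (1 + α)) < Finv x ∧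
        Finv x < ((1 + α) / (C - ε)) ^ (1 / (1 + α)) * x ^ (1 / (1 + α)) := by
  intro ε hε hεC
  have hp : (0:ℝ) < 1 + α := by linarith
  have hmem : Set.Ioo (C - ε/2) (C + ε/2) ∈ nhds C :=
    Ioo_mem_nhds (by linarith) (by linarith)
  obtain ⟨δ, hδ, hδsub⟩ := mem_nhdsGT_iff_exists_Ioc_subset.mp (hlim hmem)
  have hδ0 : (0:ℝ) < δ := hδ
  have hfb : ∀ t ∈ Set.Ioc (0:ℝ) δ, (C - ε/2) * t ^ α < f t ∧ f t < (C + ε/2) * t ^ α := by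
    intro t ht
    have htpow : 0 < t ^ α := Real.rpow_pos_of_pos ht.1 α
    have h := hδsub ht
    simp only [Set.mem_preimage, Set.mem_Ioo] at h
    constructor
    · have h1 := h.1
      rw [lt_div_iff₀ htpow] at h1; linarith
    · have h2 := h.2
      rw [div_lt_iff₀ htpow] at h2; linarith
  have hIntPow : IntegrableOn (fun t => t ^ α) (Set.Ioc (0:ℝ) δ) :=
    (intervalIntegral.intervalIntegrable_rpow' hα1).1
  have hIpow : ∀ z y : ℝ, 0 ≤ z → z ≤ y →
      ∫ t in Set.Ioc z y, t ^ α = (y ^ (1+α) - z ^ (1+α)) / (1+α) := by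
    intro z y hz hzy
    rw [← intervalIntegral.integral_of_le hzy, integral_rpow (Or.inl hα1), add_comm α 1]
  by_cases hInt : IntegrableOn f (Set.Ioc (0:ℝ) δ)
  swap
  · refine ⟨δ, hδ0, fun x hx hxF => ?_⟩
    exfalso
    rw [hF δ, integral_undef hInt] at hxF
    linarith
  have key : ∀ z y, 0 ≤ z → z ≤ y → y ≤ δ →
      (C - ε/2) * ((y^(1+α) - z^(1+α))/(1+α)) ≤ (∫ t in Set.Ioc z y, f t) ∧
      (∫ t in Set.Ioc z y, f t) ≤ (C + ε/2) * ((y^(1+α) - z^(1+α))/(1+α)) := by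
    intro z y hz hzy hy
    have hsub : Set.Ioc z y ⊆ Set.Ioc 0 δ := Set.Ioc_subset_Ioc hz hy
    have hintf := hInt.mono_set hsub
    have hintp := hIntPow.mono_set hsub
    constructor
    · calc (C - ε/2) * ((y^(1+α) - z^(1+α))/(1+α))
          = ∫ t in Set.Ioc z y, (C - ε/2) * t ^ α := by
            rw [integral_const_mul _ _, hIpow z y hz hzy]
      _ ≤ ∫ t in Set.Ioc z y, f t :=
          setIntegral_mono_on (hintp.const_mul _) hintf measurableSet_Ioc
            (fun t ht => (hfb t (hsub ht)).1.le)
    · calc (∫ t in Set.Ioc z y, f t)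
          ≤ ∫ t in Set.Ioc z y, (C + ε/2) * t ^ α :=
          setIntegral_mono_on hintf (hintp.const_mul _) measurableSet_Ioc
            (fun t ht => (hfb t (hsub ht)).2.le)
      _ = (C + ε/2) * ((y^(1+α) - z^(1+α))/(1+α)) := by
            rw [integral_const_mul _ _, hIpow z y hz hzy]
  have hFsplit : ∀ z y, 0 ≤ z → z ≤ y → y ≤ δ →
      F y = F z + ∫ t in Set.Ioc z y, f t := by
    intro z y hz hzy hy
    rw [hF y, hF z, ← Set.Ioc_union_Ioc_eq_Ioc hz hzy,
      MeasureTheory.setIntegral_union (Set.Ioc_disjoint_Ioc_of_le le_rfl) measurableSet_Ioc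
        (hInt.mono_set (Set.Ioc_subset_Ioc le_rfl (hzy.trans hy)))
        (hInt.mono_set (Set.Ioc_subset_Ioc hz hy))]
  have hmono : ∀ z y, 0 ≤ z → z < y → y ≤ δ → F z < F y := by
    intro z y hz hzy hy
    rw [hFsplit z y hz hzy.le hy]
    have h1 := (key z y hz hzy.le hy).1
    have hlt : 0 < (C - ε/2) * ((y^(1+α) - z^(1+α))/(1+α)) := by
      apply mul_pos (by linarith)
      apply div_pos _ hp
      have : z ^ (1+α) < y ^ (1+α) := Real.rpow_lt_rpow hz hzy hp
      linarith
    linarith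
  have hF0 : ∀ z : ℝ, z ≤ 0 → F z = 0 := by
    intro z hz
    rw [hF, Set.Ioc_eq_empty (by simpa using hz)]
    simp
  have hcont : ContinuousOn F (Set.Icc 0 δ) := by
    have h1 : IntegrableOn f (Set.Icc 0 δ) := by
      rwa [integrableOn_Icc_iff_integrableOn_Ioc]
    exact (intervalIntegral.continuousOn_primitive h1).congr (fun y _ => hF y)
  refine ⟨δ, hδ0, fun x hx hxF => ?_⟩
  have hmem' : x ∈ Set.Ioo (F 0) (F δ) := by rw [hF0 0 le_rfl]; exact ⟨hx, hxF⟩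
  obtain ⟨y, hy, hFy⟩ := intermediate_value_Ioo hδ0.le hcont hmem'
  have hleast : IsLeast {z | x ≤ F z} y := by
    constructor
    · exact hFy.ge
    · intro z hz
      simp only [Set.mem_setOf_eq] at hz
      by_contra hzy
      push_neg at hzy
      rcases le_or_gt z 0 with h0 | h0
      · rw [hF0 z h0] at hz; linarith
      · have h2 := hmono z y h0.le hzy hy.2.le
        rw [hFy] at h2; linarith
  have hFinvx : Finv x = y := by rw [hFinv]; exact hleast.csInf_eq
  have hypos : 0 < y := hy.1
  have hyp : 0 < y ^ (1+α) := Real.rpow_pos_of_pos hypos _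
  have hzero : (0:ℝ) ^ (1+α) = 0 := Real.zero_rpow hp.ne'
  have hk := key 0 y le_rfl hy.1.le hy.2.le
  rw [← hF y, hFy, hzero, sub_zero] at hk
  set q := y ^ (1+α) / (1+α) with hq_def
  have hq : 0 < q := div_pos hyp hp
  have hqp : q * (1+α) = y ^ (1+α) := div_mul_cancel₀ _ hp.ne'
  have hgt : (C - ε) * q < x := lt_of_lt_of_le (by nlinarith) hk.1
  have hxlt : x < (C + ε) * q := lt_of_le_of_lt hk.2 (by nlinarith)
  have hCε1 : (0:ℝ) < C + ε := by linarith
  have hCε2 : (0:ℝ) < C - ε := by linarith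
  have h1 : (1+α)/(C+ε) * x < y ^ (1+α) := by
    rw [div_mul_eq_mul_div, div_lt_iff₀ hCε1]
    nlinarith [mul_lt_mul_of_pos_right hxlt hp, hqp]
  have h2 : y ^ (1+α) < (1+α)/(C-ε) * x := by
    rw [div_mul_eq_mul_div, lt_div_iff₀ hCε2]
    nlinarith [mul_lt_mul_of_pos_right hgt hp, hqp]
  have hβ : (0:ℝ) < 1/(1+α) := one_div_pos.mpr hp
  rw [hFinvx]
  constructor
  · have hpos1 : (0:ℝ) < (1+α)/(C+ε) * x := mul_pos (div_pos hp hCε1) hx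
    have h3 := Real.rpow_lt_rpow hpos1.le h1 hβ
    rwa [Real.mul_rpow (div_pos hp hCε1).le hx.le, ← Real.rpow_mul hypos.le,
      mul_one_div_cancel hp.ne', Real.rpow_one] at h3
  · have h3 := Real.rpow_lt_rpow hyp.le h2 hβ
    rwa [Real.mul_rpow (div_pos hp hCε2).le hx.le, ← Real.rpow_mul hypos.le,
      mul_one_div_cancel hp.ne', Real.rpow_one] at h3
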